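/- The topological solution v^top(t) = Σ_{k≥1} (1/k) Σ_{p_1+⋯+p_k=k-1} (t_{p_1}/p_1!)⋯(t_{p_k}/p_k!) satisfies the genus-zero Euler–Lagrange equation t_0 + Σ_{p≥1} (t_p − δ_{p,1}) · v^top(t)^p / p! = 0 in ℂ[[t_0, t_1, …]]. -/

import Mathlib

noncomputable section
open scoped BigOperators

/-- The topological solution `v^top` of the Riemann hierarchy, as a formal power
series in `t_0, t_1, t_2, …`: `v^top = Σ_{k≥1} (1/k) Σ_{p_1+⋯+p_k=k-1} ∏ t_{p_i}/p_i!`,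
written coefficientwise. -/
def vtop : MvPowerSeries ℕ ℂ := fun m =>
  if 1 ≤ (m.sum fun _ n => n) ∧ (m.sum fun i n => i * n) + 1 = (m.sum fun _ n => n) then
    (((m.sum fun _ n => n) - 1).factorial : ℂ) /
      (m.prod fun i n => ((n.factorial : ℂ) * (i.factorial : ℂ) ^ n))
  else 0

/-- Partial derivative `∂/∂t_i` on formal power series in `t_0, t_1, …`. -/
def pd (i : ℕ) (f : MvPowerSeries ℕ ℂ) : MvPowerSeries ℕ ℂ := fun m =>
  ((m i : ℂ) + 1) * MvPowerSeries.coeff (m + Finsupp.single i 1) f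

/-- Restriction `t_0 = 0` of a formal power series. -/
def setZero (f : MvPowerSeries ℕ ℂ) : MvPowerSeries ℕ ℂ := fun m =>
  if m 0 = 0 then MvPowerSeries.coeff m f else 0

/-- `v^s_m := (∂_x^m v^top)|_{t_0=0}`, with `x = t_0`. -/
def vs (m : ℕ) : MvPowerSeries ℕ ℂ := setZero ((pd 0)^[m] vtop)

/-- The monomial `t_{μ+1} = ∏_{i ∈ μ} t_{i+1}` indexed by a multiset `μ`. -/
def tmon (μ : Multiset ℕ) : MvPowerSeries ℕ ℂ :=
  (μ.map fun i => (MvPowerSeries.X (i + 1) : MvPowerSeries ℕ ℂ)).prod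

/-- The monomial `v^s_{μ+1} = ∏_{i ∈ μ} v^s_{i+1}` indexed by a multiset `μ`. -/
def vsmon (μ : Multiset ℕ) : MvPowerSeries ℕ ℂ := (μ.map fun i => vs (i + 1)).prod
namespace ELProof
open Finset List


def deg (μ : ℕ →₀ ℕ) : ℕ := μ.sum fun _ n => n
def wt (μ : ℕ →₀ ℕ) : ℕ := μ.sum fun i n => i * n
def fc (μ : ℕ →₀ ℕ) : ℕ := μ.prod fun _ n => n.factorial
def fE (μ : ℕ →₀ ℕ) : ℕ := μ.prod fun i n => i.factorial ^ n

lemma deg_add (μ ν : ℕ →₀ ℕ) : deg (μ + ν) = deg μ + deg ν :=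
  Finsupp.sum_add_index' (fun _ => rfl) (fun _ _ _ => rfl)

lemma wt_add (μ ν : ℕ →₀ ℕ) : wt (μ + ν) = wt μ + wt ν :=
  Finsupp.sum_add_index' (fun _ => Nat.mul_zero _) (fun a b₁ b₂ => Nat.mul_add a b₁ b₂)

lemma fE_add (μ ν : ℕ →₀ ℕ) : fE (μ + ν) = fE μ * fE ν :=
  Finsupp.prod_add_index' (fun _ => pow_zero _) (fun a b₁ b₂ => pow_add _ b₁ b₂)

lemma deg_single (a n : ℕ) : deg (Finsupp.single a n) = n := Finsupp.sum_single_index rfl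
lemma wt_single (a n : ℕ) : wt (Finsupp.single a n) = a * n :=
  Finsupp.sum_single_index (Nat.mul_zero a)
lemma fE_single (a n : ℕ) : fE (Finsupp.single a n) = a.factorial ^ n :=
  Finsupp.prod_single_index (pow_zero _)

lemma deg_zero : deg 0 = 0 := rfl

lemma deg_eq_zero {μ : ℕ →₀ ℕ} (h : deg μ = 0) : μ = 0 := by
  ext a
  simp only [Finsupp.coe_zero, Pi.zero_apply]
  by_contra ha
  have hmem : a ∈ μ.support := Finsupp.mem_support_iff.2 ha
  have h2 : μ a ≤ deg μ := Finset.single_le_sum (f := fun i => μ i) (fun i _ => Nat.zero_le _) hmem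
  omega

lemma fc_pos (μ : ℕ →₀ ℕ) : 0 < fc μ := Finset.prod_pos fun i _ => Nat.factorial_pos _
lemma fE_pos (μ : ℕ →₀ ℕ) : 0 < fE μ := Finset.prod_pos fun i _ => pow_pos (Nat.factorial_pos _) _

lemma prod_add_single (f : ℕ → ℕ → ℕ) (hf : ∀ i, f i 0 = 1) (ν : ℕ →₀ ℕ) (a : ℕ) :
    (ν + Finsupp.single a 1).prod f * f a (ν a) = ν.prod f * f a (ν a + 1) := by
  classical
  set s : Finset ℕ := insert a ν.support with hs
  have hsub1 : (ν + Finsupp.single a 1).support ⊆ s := by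
    refine Finset.Subset.trans Finsupp.support_add ?_
    intro i hi
    rcases Finset.mem_union.1 hi with h | h
    · exact Finset.mem_insert_of_mem h
    · have := Finsupp.support_single_subset h
      simp only [Finset.mem_singleton] at this
      simp [hs, this]
  have hsub2 : ν.support ⊆ s := Finset.subset_insert _ _
  have h1 : (ν + Finsupp.single a 1).prod f
      = ∏ i ∈ s, f i ((ν + Finsupp.single a 1 : ℕ →₀ ℕ) i) :=
    Finsupp.prod_of_support_subset _ hsub1 f (fun i _ => hf i)
  have h2 : ν.prod f = ∏ i ∈ s, f i (ν i) :=
    Finsupp.prod_of_support_subset _ hsub2 f (fun i _ => hf i)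
  have ha : a ∈ s := Finset.mem_insert_self _ _
  rw [h1, h2, ← Finset.mul_prod_erase s _ ha, ← Finset.mul_prod_erase s (fun i => f i (ν i)) ha]
  have hoff : ∀ i ∈ s.erase a,
      f i ((ν + Finsupp.single a 1 : ℕ →₀ ℕ) i) = f i (ν i) := by
    intro i hi
    have hia : i ≠ a := Finset.ne_of_mem_erase hi
    simp [Finsupp.single_apply, hia, Ne.symm hia]
  rw [Finset.prod_congr rfl hoff]
  have haa : (ν + Finsupp.single a 1 : ℕ →₀ ℕ) a = ν a + 1 := by simp
  rw [haa]
  ring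

lemma fc_add_single (ν : ℕ →₀ ℕ) (a : ℕ) :
    fc (ν + Finsupp.single a 1) = (ν a + 1) * fc ν := by
  have h := prod_add_single (fun _ n => n.factorial) (fun _ => rfl) ν a
  have hfac : (ν a + 1).factorial = (ν a + 1) * (ν a).factorial := Nat.factorial_succ _
  have hpos : 0 < (ν a).factorial := Nat.factorial_pos _
  unfold fc
  rw [hfac] at h
  exact Nat.eq_of_mul_eq_mul_right hpos (by linarith [h])

/-! ### Words -/

def cont (L : List ℕ) : ℕ →₀ ℕ := (↑L : Multiset ℕ).toFinsupp

lemma cont_nil : cont ([] : List ℕ) = 0 := by simp [cont]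

lemma cont_append (L₁ L₂ : List ℕ) : cont (L₁ ++ L₂) = cont L₁ + cont L₂ := by
  unfold cont
  rw [← Multiset.toFinsupp_add]
  congr 1

lemma cont_single (a : ℕ) : cont [a] = Finsupp.single a 1 := by
  unfold cont
  rw [show (↑[a] : Multiset ℕ) = {a} from rfl, Multiset.toFinsupp_singleton]

lemma cont_cons (a : ℕ) (L : List ℕ) : cont (a :: L) = cont L + Finsupp.single a 1 := by
  rw [show a :: L = [a] ++ L from rfl, cont_append, cont_single, add_comm]

lemma length_eq_deg_cont (L : List ℕ) : L.length = deg (cont L) := by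
  induction L with
  | nil => simp [cont_nil, deg_zero]
  | cons a L ih => simp [cont_cons, deg_add, deg_single, ih]

lemma sum_eq_wt_cont (L : List ℕ) : L.sum = wt (cont L) := by
  induction L with
  | nil => simp [cont_nil]; rfl
  | cons a L ih =>
    simp [cont_cons, wt_add, wt_single, ih]
    ring

def Words (μ : ℕ →₀ ℕ) : Finset (List ℕ) := (Finsupp.toMultiset μ).toList.permutations.toFinset

lemma mem_Words {μ : ℕ →₀ ℕ} {L : List ℕ} : L ∈ Words μ ↔ cont L = μ := by
  rw [Words, List.mem_toFinset, List.mem_permutations, ← Multiset.coe_eq_coe,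
    Multiset.coe_toList]
  constructor
  · intro h
    rw [cont, h, Finsupp.toMultiset_toFinsupp]
  · intro h
    rw [← h, cont, Multiset.toFinsupp_toMultiset]

lemma length_of_mem_Words {μ : ℕ →₀ ℕ} {L : List ℕ} (h : L ∈ Words μ) : L.length = deg μ := by
  rw [length_eq_deg_cont, mem_Words.1 h]

lemma sum_of_mem_Words {μ : ℕ →₀ ℕ} {L : List ℕ} (h : L ∈ Words μ) : L.sum = wt μ := by
  rw [sum_eq_wt_cont, mem_Words.1 h]

lemma Words_zero : Words (0 : ℕ →₀ ℕ) = {[]} := by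
  ext L
  simp only [mem_Words, Finset.mem_singleton]
  constructor
  · intro h
    have hl := length_eq_deg_cont L
    rw [h, deg_zero] at hl
    exact List.length_eq_zero_iff.1 hl
  · rintro rfl; exact cont_nil

lemma Words_decomp {μ : ℕ →₀ ℕ} (hμ : μ ≠ 0) :
    Words μ = μ.support.biUnion fun a => (Words (μ - Finsupp.single a 1)).image (List.cons a) := by
  ext L
  simp only [Finset.mem_biUnion, Finset.mem_image, mem_Words]
  constructor
  · intro h
    match L with
    | [] => exact absurd (h ▸ cont_nil.symm) (by rw [cont_nil] at h; exact fun _ => hμ h.symm)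
    | b :: T =>
      refine ⟨b, ?_, T, ?_, rfl⟩
      · rw [← h, cont_cons]
        simp [Finsupp.mem_support_iff]
      · rw [← h, cont_cons]
        ext i
        by_cases hib : i = b <;>
          simp [Finsupp.sub_apply, Finsupp.single_apply, hib]
  · rintro ⟨a, ha, T, hT, rfl⟩
    rw [cont_cons, hT, tsub_add_cancel_of_le]
    rw [Finsupp.single_le_iff]
    exact Nat.one_le_iff_ne_zero.2 (Finsupp.mem_support_iff.1 ha)

lemma card_Words_mul_fc (μ : ℕ →₀ ℕ) : (Words μ).card * fc μ = (deg μ).factorial := by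
  generalize hn : deg μ = n
  induction n generalizing μ with
  | zero =>
    have h0 : μ = 0 := deg_eq_zero hn
    subst h0
    simp [Words_zero, fc, Nat.factorial]
  | succ n ih =>
    have hμ : μ ≠ 0 := by
      intro h; subst h; simp [deg_zero] at hn
    rw [Words_decomp hμ, Finset.card_biUnion, Finset.sum_mul]
    · have hterm : ∀ a ∈ μ.support,
        ((Words (μ - Finsupp.single a 1)).image (List.cons a)).card * fc μ
          = μ a * n.factorial := by
        intro a ha
        have hle : Finsupp.single a 1 ≤ μ :=
          Finsupp.single_le_iff.2 (Nat.one_le_iff_ne_zero.2 (Finsupp.mem_support_iff.1 ha))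
        have hsub : μ - Finsupp.single a 1 + Finsupp.single a 1 = μ := tsub_add_cancel_of_le hle
        have hdeg : deg (μ - Finsupp.single a 1) = n := by
          have h2 := deg_add (μ - Finsupp.single a 1) (Finsupp.single a 1)
          rw [hsub, hn, deg_single] at h2
          omega
        have hcard : ((Words (μ - Finsupp.single a 1)).image (List.cons a)).card
            = (Words (μ - Finsupp.single a 1)).card :=
          Finset.card_image_of_injective _ (fun x y h => by injection h)
        have hfc : fc μ = μ a * fc (μ - Finsupp.single a 1) := by
          have h3 := fc_add_single (μ - Finsupp.single a 1) a
          rw [hsub] at h3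
          have hva : (μ - Finsupp.single a 1 : ℕ →₀ ℕ) a + 1 = μ a := by
            have h1 : 1 ≤ μ a := Finsupp.single_le_iff.1 hle
            simp [Finsupp.sub_apply, Finsupp.single_apply]
            omega
          rw [h3, hva]
        rw [hcard, hfc, ← Nat.mul_assoc, Nat.mul_comm _ (μ a), Nat.mul_assoc, ih _ hdeg]
      rw [Finset.sum_congr rfl hterm, ← Finset.sum_mul]
      have hsupp : ∑ a ∈ μ.support, μ a = deg μ := rfl
      rw [hsupp, hn, Nat.factorial_succ]
    · intro a _ b _ hab
      simp only [Finset.disjoint_left, Finset.mem_image]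
      rintro L ⟨T, _, rfl⟩ ⟨T', _, hT'⟩
      exact hab (by injection hT' with h1 _; exact h1.symm)


def Good (j : ℕ) (L : List ℕ) : Prop := ∀ m, m < L.length → m < (L.take m).sum + j

instance (j : ℕ) (L : List ℕ) : Decidable (Good j L) := by unfold Good; exact Nat.decidableBallLT _ _

def rot (r : ℕ) (L : List ℕ) : List ℕ := L.drop r ++ L.take r

lemma rot_length (r : ℕ) (L : List ℕ) : (rot r L).length = L.length := by
  simp [rot]; omega

def pf (L : List ℕ) (m : ℕ) : ℤ := (((L ++ L).take m).sum : ℤ) - m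

lemma pf_zero (L : List ℕ) : pf L 0 = 0 := by simp [pf]

lemma pf_step (L : List ℕ) (m : ℕ) : pf L m - 1 ≤ pf L (m + 1) := by
  have h : ((L ++ L).take m).sum ≤ ((L ++ L).take (m + 1)).sum := by
    rw [List.take_add]
    simp
  unfold pf
  omega

lemma pf_period (L : List ℕ) (j : ℕ) (hk : L.length = L.sum + j) (m : ℕ) (hm : m ≤ L.length) :
    pf L (m + L.length) = pf L m - j := by
  have h1 : (L ++ L).take (m + L.length) = L ++ L.take m := by
    rw [add_comm, List.take_add, List.take_left, List.drop_left]
  have h2 : (L ++ L).take m = L.take m := List.take_append_of_le_length hm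
  unfold pf
  rw [h1, h2, List.sum_append]
  omega

def Rec' (L : List ℕ) (q : ℕ) : Prop := ∀ m, m < q → pf L q < pf L m

instance (L : List ℕ) (q : ℕ) : Decidable (Rec' L q) := by unfold Rec'; exact Nat.decidableBallLT _ _

def Mn (L : List ℕ) (n : ℕ) : ℤ :=
  ((Finset.range (n + 1)).image (pf L)).min' (Finset.Nonempty.image ⟨0, by simp⟩ _)

lemma Mn_le (L : List ℕ) {m n : ℕ} (h : m ≤ n) : Mn L n ≤ pf L m :=
  Finset.min'_le _ _ (Finset.mem_image_of_mem _ (by simp; omega))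

lemma Mn_mem (L : List ℕ) (n : ℕ) : ∃ m ≤ n, pf L m = Mn L n := by
  have := Finset.min'_mem ((Finset.range (n + 1)).image (pf L))
    (Finset.Nonempty.image ⟨0, by simp⟩ _)
  rw [Finset.mem_image] at this
  obtain ⟨m, hm, hpm⟩ := this
  exact ⟨m, by simp at hm; omega, hpm⟩

lemma le_Mn (L : List ℕ) (n : ℕ) (x : ℤ) (h : ∀ m ≤ n, x ≤ pf L m) : x ≤ Mn L n := by
  apply Finset.le_min'
  intro y hy
  rw [Finset.mem_image] at hy
  obtain ⟨m, hm, rfl⟩ := hy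
  exact h m (by simp at hm; omega)

lemma rec_card (L : List ℕ) (n : ℕ) :
    (((Finset.range (n + 1)).filter (Rec' L)).card : ℤ) = 1 - Mn L n := by
  induction n with
  | zero =>
    have h1 : (Finset.range 1).filter (Rec' L) = {0} := by
      ext q; simp [Finset.mem_filter, Finset.mem_range]
      intro hq; subst hq; intro m hm; omega
    have h2 : Mn L 0 = 0 := by
      have := Mn_le L (le_refl 0)
      have := le_Mn L 0 (pf L 0) (by intro m hm; interval_cases m; rfl)
      rw [pf_zero] at *
      omega
    rw [h1, h2]; simp
  | succ n ih =>
    have hins : Finset.range (n + 1 + 1) = insert (n + 1) (Finset.range (n + 1)) :=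
      Finset.range_add_one
    have hnotmem : (n + 1) ∉ Finset.range (n + 1) := by simp
    have hMn : Mn L (n + 1) = min (Mn L n) (pf L (n + 1)) := by
      apply _root_.le_antisymm
      · apply le_min
        · exact le_Mn L n _ (fun m hm => Mn_le L (by omega))
        · exact Mn_le L (le_refl _)
      · apply le_Mn
        intro m hm
        rcases Nat.lt_or_ge m (n + 1) with h | h
        · exact le_trans (min_le_left _ _) (Mn_le L (by omega))
        · have : m = n + 1 := by omega
          subst this
          exact min_le_right _ _
    by_cases hrec : Rec' L (n + 1)
    · have hlt : pf L (n + 1) < Mn L n := by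
        obtain ⟨m, hm, hpm⟩ := Mn_mem L n
        rw [← hpm]
        exact hrec m (by omega)
      have hge : Mn L n - 1 ≤ pf L (n + 1) := le_trans (by linarith [Mn_le L (le_refl n)]) (pf_step L n)
      have hval : pf L (n + 1) = Mn L n - 1 := by omega
      rw [hins, Finset.filter_insert, if_pos hrec,
        Finset.card_insert_of_notMem (fun hc => hnotmem (Finset.mem_of_mem_filter _ hc)),
        hMn, hval]
      push_cast
      rw [ih]
      have : min (Mn L n) (Mn L n - 1) = Mn L n - 1 := by omega
      rw [this]; ring
    · have hex : ∃ m ≤ n, pf L m ≤ pf L (n + 1) := by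
        unfold Rec' at hrec
        push_neg at hrec
        obtain ⟨m, hm, h⟩ := hrec
        exact ⟨m, by omega, h⟩
      have hval : min (Mn L n) (pf L (n + 1)) = Mn L n := by
        obtain ⟨m, hm, h⟩ := hex
        have := Mn_le L hm
        omega
      rw [hins, Finset.filter_insert, if_neg hrec, hMn, hval, ih]

lemma Mn_two (L : List ℕ) (j : ℕ) (hj : 1 ≤ j) (hk : L.length = L.sum + j)
    (hk1 : 1 ≤ L.length) :
    Mn L (2 * L.length - 1) = Mn L (L.length - 1) - j := by
  apply _root_.le_antisymm
  · obtain ⟨m₀, hm₀, hpm₀⟩ := Mn_mem L (L.length - 1)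
    have hper := pf_period L j hk m₀ (by omega)
    calc Mn L (2 * L.length - 1) ≤ pf L (m₀ + L.length) := Mn_le L (by omega)
      _ = Mn L (L.length - 1) - j := by rw [hper, hpm₀]
  · apply le_Mn
    intro m hm
    rcases Nat.lt_or_ge m L.length with h | h
    · have := Mn_le L (show m ≤ L.length - 1 by omega)
      omega
    · have hm' : m - L.length ≤ L.length := by omega
      have hper := pf_period L j hk (m - L.length) hm'
      have heq : m - L.length + L.length = m := by omega
      rw [heq] at hper
      have := Mn_le L (show m - L.length ≤ L.length - 1 by omega)
      omega

lemma rec_count (L : List ℕ) (j : ℕ) (hj : 1 ≤ j) (hk : L.length = L.sum + j) :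
    ((Finset.Ico L.length (2 * L.length)).filter (Rec' L)).card = j := by
  set k := L.length with hkdef
  have hk1 : 1 ≤ k := by omega
  have hsplit : Finset.range (2 * k) = Finset.range k ∪ Finset.Ico k (2 * k) := by
    rw [Finset.range_eq_Ico, Finset.range_eq_Ico, Finset.Ico_union_Ico_eq_Ico (by omega) (by omega)]
  have hdisj : Disjoint ((Finset.range k).filter (Rec' L)) ((Finset.Ico k (2 * k)).filter (Rec' L)) := by
    apply Finset.disjoint_filter_filter
    rw [Finset.range_eq_Ico]
    exact Finset.Ico_disjoint_Ico_consecutive _ _ _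
  have hcards : ((Finset.range (2 * k)).filter (Rec' L)).card
      = ((Finset.range k).filter (Rec' L)).card + ((Finset.Ico k (2 * k)).filter (Rec' L)).card := by
    rw [hsplit, Finset.filter_union, Finset.card_union_of_disjoint hdisj]
  have h2k : (2 * k - 1) + 1 = 2 * k := by omega
  have hk' : (k - 1) + 1 = k := by omega
  have e1 : (((Finset.range (2 * k)).filter (Rec' L)).card : ℤ) = 1 - Mn L (2 * k - 1) := by
    rw [← h2k]; exact rec_card L (2 * k - 1)
  have e2 : (((Finset.range k).filter (Rec' L)).card : ℤ) = 1 - Mn L (k - 1) := by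
    rw [← hk']; exact rec_card L (k - 1)
  have e3 := Mn_two L j hj hk hk1
  have hcast : (((Finset.range (2 * k)).filter (Rec' L)).card : ℤ)
      = (((Finset.range k).filter (Rec' L)).card : ℤ)
        + (((Finset.Ico k (2 * k)).filter (Rec' L)).card : ℤ) := by
    exact_mod_cast congrArg (Nat.cast : ℕ → ℤ) hcards
  have e3' : Mn L (2 * k - 1) = Mn L (k - 1) - j := e3
  omega

lemma rot_eq_take_drop (r : ℕ) (L : List ℕ) (hr : r ≤ L.length) :
    rot r L = ((L ++ L).drop r).take L.length := by
  rw [List.drop_append_of_le_length hr, List.take_append]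
  have h1 : (L.drop r).take L.length = L.drop r :=
    List.take_of_length_le (by simp)
  have h2 : L.length - (L.drop r).length = r := by simp; omega
  rw [h1, h2, rot]

lemma sum_take_rot (r t : ℕ) (L : List ℕ) (hr : r ≤ L.length) (ht : t ≤ L.length) :
    ((rot r L).take t).sum + ((L ++ L).take r).sum = ((L ++ L).take (r + t)).sum := by
  rw [rot_eq_take_drop r L hr, List.take_take, min_eq_left ht, List.take_add, List.sum_append]
  ring

lemma good_iff_rec (L : List ℕ) (j : ℕ) (hj : 1 ≤ j) (hk : L.length = L.sum + j)
    {r : ℕ} (hr : r < L.length) :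
    Good j (rot r L) ↔ Rec' L (r + L.length) := by
  have hwindow : Good j (rot r L) ↔ ∀ t, t < L.length → pf L (r + L.length) < pf L (r + t) := by
    unfold Good
    rw [rot_length]
    apply forall_congr'
    intro t
    apply imp_congr_right
    intro ht
    have hsum := sum_take_rot r t L (by omega) (by omega)
    have hper := pf_period L j hk r (by omega)
    have e1 : pf L (r + t) = ((((L ++ L).take (r + t)).sum : ℕ) : ℤ) - (r + t) := rfl
    have e3 : pf L r = ((((L ++ L).take r).sum : ℕ) : ℤ) - (r : ℕ) := rfl
    constructor
    · intro h
      omega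
    · intro h
      omega
  rw [hwindow]
  constructor
  · intro h m hm
    rcases Nat.lt_or_ge m r with hmr | hmr
    · have hper := pf_period L j hk m (by omega)
      have ht : m + L.length = r + (m + L.length - r) := by omega
      have htlt : m + L.length - r < L.length := by omega
      have h2 := h (m + L.length - r) htlt
      rw [← ht] at h2
      omega
    · have ht : m = r + (m - r) := by omega
      have h2 := h (m - r) (by omega)
      rw [← ht] at h2
      exact h2
  · intro h t ht
    exact h (r + t) (by omega)

lemma rot_good_count (L : List ℕ) (j : ℕ) (hj : 1 ≤ j) (hk : L.length = L.sum + j) :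
    ((Finset.range L.length).filter (fun r => Good j (rot r L))).card = j := by
  set k := L.length with hkdef
  have hfc : (Finset.range k).filter (fun r => Good j (rot r L))
      = (Finset.range k).filter (fun r => Rec' L (r + k)) := by
    apply Finset.filter_congr
    intro r hr
    simp only [Finset.mem_range] at hr
    exact good_iff_rec L j hj hk hr
  rw [hfc]
  have himg : ((Finset.range k).filter (fun r => Rec' L (r + k))).image (fun r => r + k)
      = (Finset.Ico k (2 * k)).filter (Rec' L) := by
    ext q
    simp only [Finset.mem_image, Finset.mem_filter, Finset.mem_range, Finset.mem_Ico]
    constructor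
    · rintro ⟨r, ⟨hr, hrec⟩, rfl⟩
      exact ⟨⟨by omega, by omega⟩, hrec⟩
    · rintro ⟨⟨h1, h2⟩, hrec⟩
      exact ⟨q - k, ⟨by omega, by rwa [Nat.sub_add_cancel h1]⟩, by omega⟩
  have hinj : ((Finset.range k).filter (fun r => Rec' L (r + k))).card
      = (((Finset.range k).filter (fun r => Rec' L (r + k))).image (fun r => r + k)).card :=
    (Finset.card_image_of_injective _ (fun a b h => by omega)).symm
  rw [hinj, himg, rec_count L j hj hk]



def GH (j : ℕ) (μ : ℕ →₀ ℕ) : Finset (List ℕ) :=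
  (Words μ).filter fun L => Good j L ∧ L.length = L.sum + j

lemma mem_GH {j : ℕ} {μ : ℕ →₀ ℕ} {L : List ℕ} :
    L ∈ GH j μ ↔ cont L = μ ∧ Good j L ∧ L.length = L.sum + j := by
  simp [GH, Finset.mem_filter, mem_Words]

lemma GH_empty {j : ℕ} {μ : ℕ →₀ ℕ} (h : ¬ deg μ = wt μ + j) : GH j μ = ∅ := by
  ext L
  simp only [mem_GH, Finset.notMem_empty, iff_false]
  rintro ⟨hc, _, hlen⟩
  have h1 := length_eq_deg_cont L
  have h2 := sum_eq_wt_cont L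
  rw [hc] at h1 h2
  omega

lemma cont_rot (r : ℕ) (L : List ℕ) : cont (rot r L) = cont L := by
  unfold rot
  rw [cont_append, add_comm, ← cont_append, List.take_append_drop]

lemma rot_rot (r : ℕ) (L : List ℕ) (hr : r ≤ L.length) :
    rot (L.length - r) (rot r L) = L := by
  unfold rot
  have hA : L.length - r = (L.drop r).length := by simp
  rw [hA, List.drop_left, List.take_left, List.take_append_drop]

lemma card_GH_mul {j : ℕ} (hj : 1 ≤ j) {μ : ℕ →₀ ℕ} (hH : deg μ = wt μ + j) :
    deg μ * (GH j μ).card = j * (Words μ).card := by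
  classical
  have hGH : GH j μ = (Words μ).filter fun L => Good j L := by
    unfold GH
    apply Finset.filter_congr
    intro L hL
    have h1 := length_of_mem_Words hL
    have h2 := sum_of_mem_Words hL
    constructor
    · rintro ⟨h, _⟩; exact h
    · intro h; exact ⟨h, by omega⟩
  have hbij : ∀ r, r < deg μ → ((Words μ).filter (fun L => Good j (rot r L))).card
      = ((Words μ).filter (fun L => Good j L)).card := by
    intro r hr
    apply Finset.card_bij (fun L _ => rot r L)
    · intro L hL
      rw [Finset.mem_filter] at hL ⊢
      refine ⟨mem_Words.2 (by rw [cont_rot, mem_Words.1 hL.1]), hL.2⟩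
    · intro L₁ h₁ L₂ h₂ heq
      have hl₁ : L₁.length = deg μ := length_of_mem_Words (Finset.mem_of_mem_filter _ h₁)
      have hl₂ : L₂.length = deg μ := length_of_mem_Words (Finset.mem_of_mem_filter _ h₂)
      have e₁ := rot_rot r L₁ (by omega)
      have e₂ := rot_rot r L₂ (by omega)
      rw [hl₁] at e₁
      rw [hl₂] at e₂
      rw [← e₁, ← e₂, heq]
    · intro M hM
      rw [Finset.mem_filter] at hM
      have hlM : M.length = deg μ := length_of_mem_Words hM.1
      refine ⟨rot (deg μ - r) M, ?_, ?_⟩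
      · rw [Finset.mem_filter]
        constructor
        · exact mem_Words.2 (by rw [cont_rot, mem_Words.1 hM.1])
        · have e := rot_rot (M.length - r) M (by omega)
          have h1 : M.length - (M.length - r) = r := by omega
          rw [h1] at e
          rw [hlM] at e
          rw [e]
          exact hM.2
      · have e := rot_rot (M.length - r) M (by omega)
        have h1 : M.length - (M.length - r) = r := by omega
        rw [h1] at e
        rw [hlM] at e
        exact e
  have key : ∑ L ∈ Words μ, ((Finset.range (deg μ)).filter (fun r => Good j (rot r L))).card
      = (Words μ).card * j := by
    rw [Finset.sum_congr rfl (fun L hL => ?_), Finset.sum_const, smul_eq_mul]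
    have h1 := length_of_mem_Words hL
    have h2 := sum_of_mem_Words hL
    rw [← h1]
    exact rot_good_count L j hj (by omega)
  have key2 : ∑ L ∈ Words μ, ((Finset.range (deg μ)).filter (fun r => Good j (rot r L))).card
      = ∑ r ∈ Finset.range (deg μ), ((Words μ).filter (fun L => Good j (rot r L))).card := by
    simp only [Finset.card_filter]
    rw [Finset.sum_comm]
  have key3 : ∑ r ∈ Finset.range (deg μ), ((Words μ).filter (fun L => Good j (rot r L))).card
      = deg μ * ((Words μ).filter (fun L => Good j L)).card := by
    rw [Finset.sum_congr rfl (fun r hr => hbij r (Finset.mem_range.1 hr)), Finset.sum_const,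
      smul_eq_mul, Finset.card_range]
  rw [hGH, ← key3, ← key2, key, Nat.mul_comm]

lemma sum_take_mono (L : List ℕ) (m : ℕ) : (L.take m).sum ≤ (L.take (m + 1)).sum := by
  rw [List.take_add]
  simp

lemma split_unique {L₁ L₂ L₁' L₂' : List ℕ}
    (h : L₁ ++ L₂ = L₁' ++ L₂') (h1 : L₁.length = L₁.sum + 1)
    (hg' : Good 1 L₁') (hlt : L₁.length < L₁'.length) : False := by
  have htake : L₁'.take L₁.length = L₁ := by
    have h2 := congrArg (List.take L₁.length) h
    rw [List.take_append_of_le_length (le_refl _),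
      List.take_append_of_le_length (le_of_lt hlt), List.take_length] at h2
    exact h2.symm
  have h3 := hg' L₁.length hlt
  rw [htake] at h3
  omega

lemma GH_concat (j : ℕ) (hj : 1 ≤ j) (μ : ℕ →₀ ℕ) :
    (GH (j + 1) μ).card
      = ∑ p ∈ Finset.HasAntidiagonal.antidiagonal μ, (GH 1 p.1).card * (GH j p.2).card := by
  classical
  have hcard : ∑ p ∈ Finset.HasAntidiagonal.antidiagonal μ, (GH 1 p.1).card * (GH j p.2).card
      = ((Finset.HasAntidiagonal.antidiagonal μ).sigma fun p => GH 1 p.1 ×ˢ GH j p.2).card := by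
    rw [Finset.card_sigma]
    exact Finset.sum_congr rfl fun p _ => (Finset.card_product _ _).symm
  rw [hcard]
  apply (Finset.card_bij (fun (x : Σ _ : (ℕ →₀ ℕ) × (ℕ →₀ ℕ), List ℕ × List ℕ) _ => x.2.1 ++ x.2.2) ?_ ?_ ?_).symm
  · -- maps into GH (j+1) μ
    rintro ⟨⟨ν, ρ⟩, L₁, L₂⟩ hx
    rw [Finset.mem_sigma, Finset.mem_product] at hx
    obtain ⟨hp, h₁, h₂⟩ := hx
    dsimp only at hp h₁ h₂ ⊢
    rw [Finset.HasAntidiagonal.mem_antidiagonal] at hp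
    rw [mem_GH] at h₁ h₂ ⊢
    obtain ⟨hc₁, hg₁, hl₁⟩ := h₁
    obtain ⟨hc₂, hg₂, hl₂⟩ := h₂
    refine ⟨by rw [cont_append, hc₁, hc₂, hp], ?_, ?_⟩
    · intro m hm
      rw [List.length_append] at hm
      rw [List.take_append, List.sum_append]
      rcases Nat.lt_or_ge m L₁.length with hcase | hcase
      · have h0 : m - L₁.length = 0 := by omega
        rw [h0]
        simp only [List.take_zero, List.sum_nil]
        have := hg₁ m hcase
        omega
      · rw [List.take_of_length_le hcase]
        have ht : m - L₁.length < L₂.length := by omega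
        have := hg₂ (m - L₁.length) ht
        omega
    · rw [List.length_append, List.sum_append]
      omega
  · -- injective
    rintro ⟨⟨ν, ρ⟩, L₁, L₂⟩ hx ⟨⟨ν', ρ'⟩, L₁', L₂'⟩ hx' heq
    rw [Finset.mem_sigma, Finset.mem_product] at hx hx'
    obtain ⟨hp, h₁, h₂⟩ := hx
    obtain ⟨hp', h₁', h₂'⟩ := hx'
    dsimp only at hp h₁ h₂ hp' h₁' h₂' heq
    rw [mem_GH] at h₁ h₂ h₁' h₂'
    have hlen : L₁.length = L₁'.length := by
      rcases Nat.lt_trichotomy L₁.length L₁'.length with h | h | h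
      · exact absurd (split_unique heq h₁.2.2 h₁'.2.1 h) (fun f => f)
      · exact h
      · exact absurd (split_unique heq.symm h₁'.2.2 h₁.2.1 h) (fun f => f)
    obtain ⟨e₁, e₂⟩ := List.append_inj heq hlen
    have hν : ν = ν' := by rw [← h₁.1, ← h₁'.1, e₁]
    have hρ : ρ = ρ' := by rw [← h₂.1, ← h₂'.1, e₂]
    subst hν; subst hρ; subst e₁; subst e₂
    rfl
  · -- surjective
    intro L hL
    rw [mem_GH] at hL
    obtain ⟨hc, hg, hlen⟩ := hL
    have hQex : ∃ l, (L.take l).sum + 1 ≤ l := by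
      refine ⟨L.length, ?_⟩
      rw [List.take_length]
      omega
    set l := Nat.find hQex with hldef
    have hQl : (L.take l).sum + 1 ≤ l := Nat.find_spec hQex
    have hmin : ∀ m, m < l → ¬ ((L.take m).sum + 1 ≤ m) := fun m hm => Nat.find_min hQex hm
    have hl1 : 1 ≤ l := by
      rcases Nat.eq_zero_or_pos l with h | h
      · rw [h] at hQl; simp at hQl
      · exact h
    have hlk : l ≤ L.length := Nat.find_min' hQex (by rw [List.take_length]; omega)
    have hstl : (L.take l).sum + 1 = l := by
      have h1 := hmin (l - 1) (by omega)
      have h2 : (L.take (l - 1)).sum ≤ (L.take l).sum := by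
        have := sum_take_mono L (l - 1)
        have he : l - 1 + 1 = l := by omega
        rwa [he] at this
      omega
    refine ⟨⟨(cont (L.take l), cont (L.drop l)), (L.take l, L.drop l)⟩, ?_, List.take_append_drop l L⟩
    rw [Finset.mem_sigma, Finset.mem_product, Finset.HasAntidiagonal.mem_antidiagonal]
    dsimp only
    have hlen₁ : (L.take l).length = l := by
      rw [List.length_take]; omega
    have hsum₂ : (L.take l).sum + (L.drop l).sum = L.sum := by
      conv_rhs => rw [← List.take_append_drop l L]
      rw [List.sum_append]
    have hlen₂ : (L.take l).length + (L.drop l).length = L.length := by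
      conv_rhs => rw [← List.take_append_drop l L]
      rw [List.length_append]
    refine ⟨?_, ?_, ?_⟩
    · rw [← cont_append, List.take_append_drop]
      exact hc
    · rw [mem_GH]
      refine ⟨rfl, ?_, by omega⟩
      intro m hm
      rw [hlen₁] at hm
      rw [List.take_take, min_eq_left (le_of_lt hm)]
      have := hmin m hm
      omega
    · rw [mem_GH]
      refine ⟨rfl, ?_, by omega⟩
      intro t ht
      have hgt := hg (l + t) (by omega)
      rw [List.take_add, List.sum_append] at hgt
      omega



lemma fc_ne (μ : ℕ →₀ ℕ) : (fc μ : ℂ) ≠ 0 :=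
  Nat.cast_ne_zero.2 (Nat.pos_iff_ne_zero.1 (fc_pos μ))

lemma fE_ne (μ : ℕ →₀ ℕ) : (fE μ : ℂ) ≠ 0 :=
  Nat.cast_ne_zero.2 (Nat.pos_iff_ne_zero.1 (fE_pos μ))

lemma prodC (μ : ℕ →₀ ℕ) :
    (μ.prod fun i n => ((n.factorial : ℂ)) * ((i.factorial : ℂ)) ^ n)
      = (fc μ : ℂ) * (fE μ : ℂ) := by
  unfold fc fE
  simp only [Finsupp.prod]
  push_cast
  rw [← Finset.prod_mul_distrib]

lemma card_GH_C {j : ℕ} (hj : 1 ≤ j) {μ : ℕ →₀ ℕ} (hH : deg μ = wt μ + j) :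
    ((GH j μ).card : ℂ) = (j : ℂ) * ((deg μ - 1).factorial : ℂ) / (fc μ : ℂ) := by
  have hk1 : 1 ≤ deg μ := by omega
  have h1 := card_GH_mul hj hH
  have h2 := card_Words_mul_fc μ
  have h3 : (deg μ).factorial = deg μ * (deg μ - 1).factorial := by
    obtain ⟨k, hk⟩ : ∃ k, deg μ = k + 1 := ⟨deg μ - 1, by omega⟩
    rw [hk]
    simp [Nat.factorial_succ]
  have hN : (GH j μ).card * fc μ = j * (deg μ - 1).factorial := by
    have h4 : ((GH j μ).card * fc μ) * deg μ = (j * (deg μ - 1).factorial) * deg μ := by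
      have h5 : (GH j μ).card * fc μ * deg μ = deg μ * (GH j μ).card * fc μ := by ring
      rw [h5, h1, Nat.mul_assoc, h2, h3]
      ring
    exact Nat.eq_of_mul_eq_mul_right (by omega) h4
  have h6 := congrArg (Nat.cast : ℕ → ℂ) hN
  push_cast at h6
  rw [eq_div_iff (fc_ne μ)]
  exact h6

lemma coeff_vtop (μ : ℕ →₀ ℕ) :
    MvPowerSeries.coeff μ vtop = ((GH 1 μ).card : ℂ) / (fE μ : ℂ) := by
  have hc : MvPowerSeries.coeff μ vtop = vtop μ := rfl
  rw [hc]
  unfold vtop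
  rw [show (μ.sum fun _ n => n) = deg μ from rfl, show (μ.sum fun i n => i * n) = wt μ from rfl,
    prodC]
  by_cases hH : deg μ = wt μ + 1
  · rw [if_pos ⟨by omega, by omega⟩, card_GH_C le_rfl hH]
    rw [div_div]
    push_cast
    ring
  · rw [if_neg (fun hc => hH (by omega)), GH_empty hH]
    simp

lemma coeff_vtop_pow : ∀ j, 1 ≤ j → ∀ μ : ℕ →₀ ℕ,
    MvPowerSeries.coeff μ (vtop ^ j) = ((GH j μ).card : ℂ) / (fE μ : ℂ) := by
  intro j
  induction j with
  | zero => omega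
  | succ j ih =>
    intro _ μ
    rcases Nat.eq_zero_or_pos j with hj0 | hj1
    · subst hj0
      rw [pow_one]
      exact coeff_vtop μ
    · rw [pow_succ', MvPowerSeries.coeff_mul]
      have hterm : ∀ p ∈ Finset.HasAntidiagonal.antidiagonal μ,
          MvPowerSeries.coeff p.1 vtop * MvPowerSeries.coeff p.2 (vtop ^ j)
            = (((GH 1 p.1).card * (GH j p.2).card : ℕ) : ℂ) / (fE μ : ℂ) := by
        intro p hp
        rw [coeff_vtop, ih hj1]
        rw [div_mul_div_comm]
        have hfE : (fE p.1 : ℂ) * fE p.2 = fE μ := by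
          rw [← Nat.cast_mul, ← fE_add, Finset.HasAntidiagonal.mem_antidiagonal.1 hp]
        rw [hfE]
        push_cast
        ring
      rw [Finset.sum_congr rfl hterm, ← Finset.sum_div, ← Nat.cast_sum, ← GH_concat j hj1 μ]

lemma coeff_vtop_pow' (j : ℕ) (hj : 1 ≤ j) (μ : ℕ →₀ ℕ) :
    MvPowerSeries.coeff μ (vtop ^ j)
      = if deg μ = wt μ + j then
          (j : ℂ) * ((deg μ - 1).factorial : ℂ) / ((fc μ : ℂ) * (fE μ : ℂ)) else 0 := by
  rw [coeff_vtop_pow j hj μ]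
  by_cases hH : deg μ = wt μ + j
  · rw [if_pos hH, card_GH_C hj hH, div_div]
  · rw [if_neg hH, GH_empty hH]
    simp

lemma coeff_X_mul' (i : ℕ) (f : MvPowerSeries ℕ ℂ) (μ : ℕ →₀ ℕ) :
    MvPowerSeries.coeff μ (MvPowerSeries.X i * f)
      = if Finsupp.single i 1 ≤ μ then MvPowerSeries.coeff (μ - Finsupp.single i 1) f
        else 0 := by
  rw [MvPowerSeries.X_def, MvPowerSeries.coeff_monomial_mul]
  split_ifs <;> simp

end ELProof

open ELProof Finset

/-- The topological solution satisfies the genus-zero Euler–Lagrange equation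
`t_0 + Σ_{p≥1} (t_p − δ_{p,1}) (v^top)^p / p! = 0` (coefficientwise, the sum over
`p` being a sum of complex numbers). -/
theorem vtop_euler_lagrange :
    ∀ μ : ℕ →₀ ℕ,
      MvPowerSeries.coeff μ (MvPowerSeries.X 0 : MvPowerSeries ℕ ℂ) +
        ∑' p : ℕ,
          MvPowerSeries.coeff μ
            ((((p + 1).factorial : ℂ))⁻¹ •
              ((MvPowerSeries.X (p + 1) - if p = 0 then 1 else 0) * vtop ^ (p + 1))) = 0 := by
  intro μ
  classical
  have hFp : ∀ p : ℕ,
      MvPowerSeries.coeff μ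
        ((((p + 1).factorial : ℂ))⁻¹ •
          ((MvPowerSeries.X (p + 1) - if p = 0 then 1 else 0) * vtop ^ (p + 1)))
      = (((p + 1).factorial : ℂ))⁻¹ *
          ((if Finsupp.single (p + 1) 1 ≤ μ then
              MvPowerSeries.coeff (μ - Finsupp.single (p + 1) 1) (vtop ^ (p + 1)) else 0)
            - (if p = 0 then MvPowerSeries.coeff μ (vtop ^ (p + 1)) else 0)) := by
    intro p
    rw [MvPowerSeries.coeff_smul]
    congr 1
    by_cases hp : p = 0
    · subst hp
      rw [if_pos rfl, if_pos rfl, sub_mul, one_mul, map_sub, coeff_X_mul']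
    · rw [if_neg hp, if_neg hp, sub_zero, coeff_X_mul', sub_zero]
  -- facts about μ - single
  have hsub : ∀ p : ℕ, Finsupp.single (p + 1) 1 ≤ μ →
      deg μ = deg (μ - Finsupp.single (p + 1) 1) + 1
        ∧ wt μ = wt (μ - Finsupp.single (p + 1) 1) + (p + 1)
        ∧ μ (p + 1) = (μ - Finsupp.single (p + 1) 1 : ℕ →₀ ℕ) (p + 1) + 1 := by
    intro p hle
    have he : μ - Finsupp.single (p + 1) 1 + Finsupp.single (p + 1) 1 = μ :=
      tsub_add_cancel_of_le hle
    refine ⟨?_, ?_, ?_⟩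
    · conv_lhs => rw [← he]
      rw [deg_add, deg_single]
    · conv_lhs => rw [← he]
      rw [wt_add, wt_single, Nat.mul_one]
    · conv_lhs => rw [← he]
      simp
  have hvanish : ∀ p ∉ Finset.range (deg μ + 1),
      MvPowerSeries.coeff μ
        ((((p + 1).factorial : ℂ))⁻¹ •
          ((MvPowerSeries.X (p + 1) - if p = 0 then 1 else 0) * vtop ^ (p + 1))) = 0 := by
    intro p hp
    rw [Finset.mem_range, not_lt] at hp
    rw [hFp p]
    have h1 : (if Finsupp.single (p + 1) 1 ≤ μ then
        MvPowerSeries.coeff (μ - Finsupp.single (p + 1) 1) (vtop ^ (p + 1)) else 0) = 0 := by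
      split_ifs with hle
      · obtain ⟨hd, hw, _⟩ := hsub p hle
        rw [coeff_vtop_pow' (p + 1) (by omega), if_neg (by omega)]
      · rfl
    rw [h1, if_neg (by omega : ¬ p = 0), sub_zero, mul_zero]
  rw [tsum_eq_sum hvanish]
  by_cases hH : deg μ = wt μ + 1
  · -- on the hyperplane
    rcases Nat.lt_or_ge (deg μ) 2 with hk1 | hk2
    · -- deg μ = 1, μ = single 0 1
      have hdeg1 : deg μ = 1 := by omega
      have hμ : μ = Finsupp.single 0 1 := by
        have hcard : (Finsupp.toMultiset μ).card = 1 := by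
          rw [Finsupp.card_toMultiset]
          exact hdeg1
        obtain ⟨a, ha⟩ := Multiset.card_eq_one.1 hcard
        have h2 := congrArg Multiset.toFinsupp ha
        rw [Finsupp.toMultiset_toFinsupp, Multiset.toFinsupp_singleton] at h2
        have ha0 : a = 0 := by
          have hw : wt μ = a := by rw [h2, wt_single, Nat.mul_one]
          omega
        rw [h2, ha0]
      have hX : MvPowerSeries.coeff μ (MvPowerSeries.X 0 : MvPowerSeries ℕ ℂ) = 1 := by
        rw [MvPowerSeries.coeff_X, if_pos hμ]
      have hrange : deg μ + 1 = 2 := by omega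
      rw [hrange, Finset.sum_range_succ, Finset.sum_range_one, hFp 0, hFp 1]
      have hne1 : ¬ Finsupp.single (0 + 1) 1 ≤ μ := by
        rw [hμ, Finsupp.single_le_iff]
        simp [Finsupp.single_apply]
      have hne2 : ¬ Finsupp.single (1 + 1) 1 ≤ μ := by
        rw [hμ, Finsupp.single_le_iff]
        simp [Finsupp.single_apply]
      have hcoeff : MvPowerSeries.coeff μ (vtop ^ (0 + 1)) = 1 := by
        rw [coeff_vtop_pow' 1 le_rfl, if_pos (by omega)]
        have hfc1 : fc μ = 1 := by
          rw [hμ, fc, Finsupp.prod_single_index] <;> rfl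
        have hfE1 : fE μ = 1 := by
          rw [hμ, fE_single]
          simp
        rw [hdeg1, hfc1, hfE1]
        norm_num
      rw [if_neg hne1, if_neg hne2, if_pos rfl, if_neg (by omega : ¬ (1 : ℕ) = 0), hcoeff, hX]
      norm_num
    · -- deg μ ≥ 2
      have hX : MvPowerSeries.coeff μ (MvPowerSeries.X 0 : MvPowerSeries ℕ ℂ) = 0 := by
        rw [MvPowerSeries.coeff_X, if_neg]
        intro h
        rw [h, deg_single] at hk2
        omega
      set k := deg μ with hkdef
      set D : ℂ := (fc μ : ℂ) * (fE μ : ℂ) with hDdef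
      have hDne : D ≠ 0 := mul_ne_zero (fc_ne μ) (fE_ne μ)
      -- closed form for each term
      have hclosed : ∀ p : ℕ,
          MvPowerSeries.coeff μ
            ((((p + 1).factorial : ℂ))⁻¹ •
              ((MvPowerSeries.X (p + 1) - if p = 0 then 1 else 0) * vtop ^ (p + 1)))
          = (((p + 1) * μ (p + 1) : ℕ) : ℂ) * ((k - 2).factorial : ℂ) / D
            - (if p = 0 then ((k - 1).factorial : ℂ) / D else 0) := by
        intro p
        rw [hFp p]
        have hB : (if p = 0 then MvPowerSeries.coeff μ (vtop ^ (p + 1)) else 0)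
            = if p = 0 then ((k - 1).factorial : ℂ) / D else 0 := by
          split_ifs with hp
          · subst hp
            rw [coeff_vtop_pow' 1 le_rfl, if_pos (by omega)]
            rw [hDdef]
            push_cast
            ring
          · rfl
        have hA : (((p + 1).factorial : ℂ))⁻¹ *
            (if Finsupp.single (p + 1) 1 ≤ μ then
              MvPowerSeries.coeff (μ - Finsupp.single (p + 1) 1) (vtop ^ (p + 1)) else 0)
            = (((p + 1) * μ (p + 1) : ℕ) : ℂ) * ((k - 2).factorial : ℂ) / D := by
          by_cases hle : Finsupp.single (p + 1) 1 ≤ μ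
          · obtain ⟨hd, hw, happ⟩ := hsub p hle
            rw [if_pos hle, coeff_vtop_pow' (p + 1) (by omega), if_pos (by omega)]
            set σ := μ - Finsupp.single (p + 1) 1 with hσ
            have he : σ + Finsupp.single (p + 1) 1 = μ := tsub_add_cancel_of_le hle
            have hfcμ : (fc μ : ℂ) = (μ (p + 1) : ℂ) * (fc σ : ℂ) := by
              have := fc_add_single σ (p + 1)
              rw [he, ← happ] at this
              exact_mod_cast congrArg (Nat.cast : ℕ → ℂ) this
            have hfEμ : (fE μ : ℂ) = (fE σ : ℂ) * (((p + 1).factorial : ℕ) : ℂ) := by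
              have h2 : fE μ = fE σ * (p + 1).factorial := by
                conv_lhs => rw [← he]
                rw [fE_add, fE_single, pow_one]
              exact_mod_cast congrArg (Nat.cast : ℕ → ℂ) h2
            have hdd : deg σ - 1 = k - 2 := by omega
            have hμp : 1 ≤ μ (p + 1) := Finsupp.single_le_iff.1 hle
            rw [hdd, hDdef, hfcμ, hfEμ]
            have hfacne : (((p + 1).factorial : ℕ) : ℂ) ≠ 0 :=
              Nat.cast_ne_zero.2 (Nat.factorial_ne_zero _)
            have hμpne : (μ (p + 1) : ℂ) ≠ 0 := Nat.cast_ne_zero.2 (by omega)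
            rw [inv_mul_eq_div, div_div, div_eq_div_iff
              (mul_ne_zero (mul_ne_zero (fc_ne σ) (fE_ne σ)) hfacne)
              (mul_ne_zero (mul_ne_zero hμpne (fc_ne σ)) (mul_ne_zero (fE_ne σ) hfacne))]
            push_cast
            ring
          · rw [if_neg hle]
            have h0 : μ (p + 1) = 0 := by
              by_contra h
              exact hle (Finsupp.single_le_iff.2 (by omega))
            rw [h0]
            simp
        rw [mul_sub, hA, hB]
        congr 1
        split_ifs with hp
        · subst hp
          norm_num
        · simp
      rw [Finset.sum_congr rfl (fun p _ => hclosed p), Finset.sum_sub_distrib]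
      have hBsum : ∑ p ∈ Finset.range (k + 1),
          (if p = 0 then ((k - 1).factorial : ℂ) / D else 0) = ((k - 1).factorial : ℂ) / D := by
        rw [Finset.sum_ite_eq' (Finset.range (k + 1)) 0
          (fun _ => ((k - 1).factorial : ℂ) / D)]
        rw [if_pos (Finset.mem_range.2 (by omega))]
      have hAsum : ∑ p ∈ Finset.range (k + 1),
          (((p + 1) * μ (p + 1) : ℕ) : ℂ) * ((k - 2).factorial : ℂ) / D
          = ((wt μ : ℕ) : ℂ) * ((k - 2).factorial : ℂ) / D := by
        have hsupp : μ.support ⊆ Finset.range (k + 2) := by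
          intro i hi
          have h1 : 1 ≤ μ i := Nat.one_le_iff_ne_zero.2 (Finsupp.mem_support_iff.1 hi)
          have h2 : i * μ i ≤ wt μ :=
            Finset.single_le_sum (f := fun i => i * μ i) (fun _ _ => Nat.zero_le _) hi
          have h3 : i ≤ i * μ i := Nat.le_mul_of_pos_right i (by omega)
          rw [Finset.mem_range]
          omega
        have hwt : wt μ = ∑ i ∈ Finset.range (k + 2), i * μ i :=
          Finsupp.sum_of_support_subset μ hsupp _ (fun i _ => Nat.mul_zero i)
        have hshift : ∑ i ∈ Finset.range (k + 2), i * μ i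
            = (∑ p ∈ Finset.range (k + 1), (p + 1) * μ (p + 1)) + 0 * μ 0 :=
          Finset.sum_range_succ' _ (k + 1)
        have hsum : ∑ p ∈ Finset.range (k + 1), (p + 1) * μ (p + 1) = wt μ := by
          rw [hwt]
          omega
        rw [← hsum, Nat.cast_sum, Finset.sum_mul, Finset.sum_div]
      rw [hBsum, hAsum, hX, zero_add]
      have hwtv : (wt μ : ℕ) = k - 1 := by omega
      have hfact : ((k - 1).factorial : ℂ) = ((k - 1 : ℕ) : ℂ) * ((k - 2).factorial : ℂ) := by
        have h2 : (k - 1).factorial = (k - 1) * (k - 2).factorial := by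
          have hm : k - 1 = (k - 2) + 1 := by omega
          rw [hm, Nat.factorial_succ]
        exact_mod_cast congrArg (Nat.cast : ℕ → ℂ) h2
      rw [hwtv, hfact]
      ring
  · -- off the hyperplane
    have hX : MvPowerSeries.coeff μ (MvPowerSeries.X 0 : MvPowerSeries ℕ ℂ) = 0 := by
      rw [MvPowerSeries.coeff_X, if_neg]
      intro h
      apply hH
      rw [h, deg_single, wt_single]
    have hzero : ∀ p ∈ Finset.range (deg μ + 1),
        MvPowerSeries.coeff μ
          ((((p + 1).factorial : ℂ))⁻¹ •
            ((MvPowerSeries.X (p + 1) - if p = 0 then 1 else 0) * vtop ^ (p + 1))) = 0 := by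
      intro p _
      rw [hFp p]
      have h1 : (if Finsupp.single (p + 1) 1 ≤ μ then
          MvPowerSeries.coeff (μ - Finsupp.single (p + 1) 1) (vtop ^ (p + 1)) else 0) = 0 := by
        split_ifs with hle
        · obtain ⟨hd, hw, _⟩ := hsub p hle
          rw [coeff_vtop_pow' (p + 1) (by omega), if_neg (by omega)]
        · rfl
      have h2 : (if p = 0 then MvPowerSeries.coeff μ (vtop ^ (p + 1)) else 0) = 0 := by
        split_ifs with hp
        · subst hp
          rw [coeff_vtop_pow' 1 le_rfl, if_neg (by omega)]
        · rfl
      rw [h1, h2, sub_zero, mul_zero]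
    rw [Finset.sum_eq_zero hzero, hX, add_zero]
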